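/- Let $\chi \colon E^\times \to \mathbb{C}^\times$ be a group homomorphism trivial on $\mathbb{Q}_p^\times$ with conductor exponent $n > 0$. Then $\sum_{b} \chi(1+b\theta)^{-1} = 0$ and $\sum_{a} \chi(ap+\theta)^{-1} = 0$, where $b$ and $a$ each run over a complete set of representatives of $\mathbb{Z}_p/p^n\mathbb{Z}_p$ (the summands depending only on the residue classes of $b$ and $a$ modulo $p^n$). -/

import Mathlib

open scoped Classical

namespace ArakawaQuad

variable (p : ℕ) [Fact p.Prime]
variable (E : Type*) [Field E] [Algebra ℚ_[p] E] [Algebra ℤ_[p] E]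
  [IsScalarTower ℤ_[p] ℚ_[p] E]

/-- Membership in `𝒪_{E,i} = ℤ_p + p^i 𝒪_E`, where `𝒪_E` is the ring of integers
(the integral closure of `ℤ_p` in `E`). -/
def MemOEi (i : ℕ) (z : E) : Prop :=
  ∃ a : ℤ_[p], ∃ w ∈ integralClosure ℤ_[p] E, z = algebraMap ℤ_[p] E a + (p : E) ^ i * w

/-- Membership of a unit `u ∈ Eˣ` in `𝒪_{E,i}^× = 𝒪_{E,i} ∩ 𝒪_E^×`. -/
def MemOEiUnits (i : ℕ) (u : Eˣ) : Prop :=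
  MemOEi p E i ↑u ∧ (↑u : E) ∈ integralClosure ℤ_[p] E ∧
    ((↑u⁻¹ : E) ∈ integralClosure ℤ_[p] E)

/-- `χ : E^× → ℂ^×` is trivial on `ℚ_p^×`. -/
def TrivialOnQp (χ : Eˣ →* ℂˣ) : Prop :=
  ∀ t : ℚ_[p]ˣ, χ (Units.map (algebraMap ℚ_[p] E).toMonoidHom t) = 1

/-- `χ` has conductor exponent `n`: it is trivial on `𝒪_{E,n}^×` and, when `n > 0`,
nontrivial on `𝒪_{E,n-1}^×`. -/
def CondExp (χ : Eˣ →* ℂˣ) (n : ℕ) : Prop :=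
  (∀ u : Eˣ, MemOEiUnits p E n u → χ u = 1) ∧
  (0 < n → ∃ u : Eˣ, MemOEiUnits p E (n - 1) u ∧ χ u ≠ 1)

/-- The value of `χ : E^× → ℂ^×` at an element of `E`, with junk value `0` at `0`. -/
noncomputable def chiV {F : Type*} [Field F] (χ : Fˣ →* ℂˣ) (z : F) : ℂ :=
  if h : z ≠ 0 then (χ (Units.mk0 z h) : ℂ) else 0

/-- `E` is an unramified quadratic extension of `ℚ_p`: it has degree `2` and the
maximal ideal of its ring of integers `𝒪_E` is `p 𝒪_E` (an element of `𝒪_E` is a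
unit of `𝒪_E` if and only if it does not lie in `p 𝒪_E`). -/
def Unramified : Prop :=
  Module.finrank ℚ_[p] E = 2 ∧
  ∀ z ∈ integralClosure ℤ_[p] E,
    ((∃ w ∈ integralClosure ℤ_[p] E, z * w = 1) ↔
      ¬ ∃ w ∈ integralClosure ℤ_[p] E, z = (p : E) * w)

/-- `E` is a ramified quadratic extension of `ℚ_p` with maximal ideal `𝔭 = θ 𝒪_E`
satisfying `𝔭² = p 𝒪_E`: it has degree `2`, `θ ∈ 𝒪_E` generates the maximal ideal
(an element of `𝒪_E` is a unit of `𝒪_E` iff it is not in `θ 𝒪_E`), and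
`θ² = p u` for a unit `u` of `𝒪_E`. -/
def Ramified (θ : E) : Prop :=
  Module.finrank ℚ_[p] E = 2 ∧
  θ ∈ integralClosure ℤ_[p] E ∧
  (∀ z ∈ integralClosure ℤ_[p] E,
    ((∃ w ∈ integralClosure ℤ_[p] E, z * w = 1) ↔
      ¬ ∃ w ∈ integralClosure ℤ_[p] E, z = θ * w)) ∧
  (∃ u ∈ integralClosure ℤ_[p] E,
    (∃ v ∈ integralClosure ℤ_[p] E, u * v = 1) ∧ θ ^ 2 = (p : E) * u)

/-- `{1, θ}` is a `ℤ_p`-basis of the ring of integers `𝒪_E`. -/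
def IsIntBasis (θ : E) : Prop :=
  θ ∈ integralClosure ℤ_[p] E ∧
  ∀ z ∈ integralClosure ℤ_[p] E, ∃! ab : ℤ_[p] × ℤ_[p],
    z = algebraMap ℤ_[p] E ab.1 + algebraMap ℤ_[p] E ab.2 * θ

/-- `x` lies in the double coset `ℚ_p^× y 𝒪_{E,i}^×` inside `E^×`. -/
def InCoset (i : ℕ) (y x : E) : Prop :=
  ∃ t : ℚ_[p]ˣ, ∃ u : Eˣ, MemOEiUnits p E i u ∧
    x = algebraMap ℚ_[p] E ↑t * y * ↑u

/-- The unit group `𝒪_E^×`, as a subgroup of `E^×`. -/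
def OEUnits : Subgroup Eˣ where
  carrier := {u | (↑u : E) ∈ integralClosure ℤ_[p] E ∧
    ((↑u⁻¹ : E) ∈ integralClosure ℤ_[p] E)}
  one_mem' := ⟨by simpa using (integralClosure ℤ_[p] E).one_mem,
    by simpa using (integralClosure ℤ_[p] E).one_mem⟩
  mul_mem' := by
    rintro a b ⟨ha1, ha2⟩ ⟨hb1, hb2⟩
    refine ⟨?_, ?_⟩
    · simpa [Units.val_mul] using mul_mem ha1 hb1
    · simpa [Units.val_mul, mul_inv_rev] using mul_mem hb2 ha2
  inv_mem' := by
    rintro a ⟨h1, h2⟩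
    exact ⟨h2, by simpa using h1⟩

end ArakawaQuad

open ArakawaQuad

set_option linter.unusedSectionVars false

section Helpers

variable {p : ℕ} [Fact p.Prime]


lemma AQ.padic_unit_of (a c m : ℤ_[p]) (h : a * c + p * m = 1) : IsUnit a := by
  by_contra h'
  have hd : (p : ℤ_[p]) ∣ a := (PadicInt.norm_lt_one_iff_dvd a).1 (PadicInt.not_isUnit_iff.1 h')
  have h1 : (p : ℤ_[p]) ∣ 1 := by
    have := dvd_add (hd.mul_right c) (Dvd.intro m rfl)
    rwa [h] at this
  exact (mem_nonunits_iff.1 PadicInt.p_nonunit) (isUnit_of_dvd_one h1)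

variable {E : Type*} [Field E] [Algebra ℚ_[p] E] [Algebra ℤ_[p] E]
  [IsScalarTower ℤ_[p] ℚ_[p] E] {θ u : E}

lemma AQ.mem_O_of_coords (hθO : θ ∈ integralClosure ℤ_[p] E) (a b : ℤ_[p]) :
    algebraMap ℤ_[p] E a + algebraMap ℤ_[p] E b * θ ∈ integralClosure ℤ_[p] E :=
  add_mem (Subalgebra.algebraMap_mem _ _) (mul_mem (Subalgebra.algebraMap_mem _ _) hθO)

lemma AQ.coords_unique (hθ : IsIntBasis p E θ) {a b a' b' : ℤ_[p]}
    (h : algebraMap ℤ_[p] E a + algebraMap ℤ_[p] E b * θ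
       = algebraMap ℤ_[p] E a' + algebraMap ℤ_[p] E b' * θ) : a = a' ∧ b = b' := by
  have hz := AQ.mem_O_of_coords hθ.1 a b
  have h2 := (hθ.2 _ hz).unique (y₁ := (a, b)) (y₂ := (a', b')) rfl h
  exact ⟨congrArg Prod.fst h2, congrArg Prod.snd h2⟩

lemma AQ.coords_exist (hθ : IsIntBasis p E θ) {z : E} (hz : z ∈ integralClosure ℤ_[p] E) :
    ∃ a b : ℤ_[p], z = algebraMap ℤ_[p] E a + algebraMap ℤ_[p] E b * θ := by
  obtain ⟨ab, h, -⟩ := hθ.2 z hz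
  exact ⟨ab.1, ab.2, h⟩

lemma AQ.mul_coords (hθ2 : θ ^ 2 = (p : E) * u) {u₁ u₂ : ℤ_[p]}
    (hu : u = algebraMap ℤ_[p] E u₁ + algebraMap ℤ_[p] E u₂ * θ) (a b c d : ℤ_[p]) :
    (algebraMap ℤ_[p] E a + algebraMap ℤ_[p] E b * θ)
      * (algebraMap ℤ_[p] E c + algebraMap ℤ_[p] E d * θ)
    = algebraMap ℤ_[p] E (a * c + b * d * p * u₁)
      + algebraMap ℤ_[p] E (a * d + b * c + b * d * p * u₂) * θ := by
  simp only [map_add, map_mul, map_natCast]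
  linear_combination (algebraMap ℤ_[p] E b * algebraMap ℤ_[p] E d) * hθ2
    + (algebraMap ℤ_[p] E b * algebraMap ℤ_[p] E d * (p : E)) * hu

lemma AQ.theta_mul (hθ2 : θ ^ 2 = (p : E) * u) {u₁ u₂ : ℤ_[p]}
    (hu : u = algebraMap ℤ_[p] E u₁ + algebraMap ℤ_[p] E u₂ * θ) (a b : ℤ_[p]) :
    θ * (algebraMap ℤ_[p] E a + algebraMap ℤ_[p] E b * θ)
    = algebraMap ℤ_[p] E (p * (b * u₁)) + algebraMap ℤ_[p] E (a + p * (b * u₂)) * θ := by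
  simp only [map_add, map_mul, map_natCast]
  linear_combination (algebraMap ℤ_[p] E b) * hθ2 + (algebraMap ℤ_[p] E b * (p : E)) * hu

lemma AQ.inv_exists (hθ : IsIntBasis p E θ)
    (hcrit : ∀ z ∈ integralClosure ℤ_[p] E,
      ((∃ w ∈ integralClosure ℤ_[p] E, z * w = 1) ↔
        ¬ ∃ w ∈ integralClosure ℤ_[p] E, z = θ * w))
    (hθ2 : θ ^ 2 = (p : E) * u) {u₁ u₂ : ℤ_[p]}
    (hu : u = algebraMap ℤ_[p] E u₁ + algebraMap ℤ_[p] E u₂ * θ)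
    {a b : ℤ_[p]} (ha : IsUnit a) :
    ∃ w ∈ integralClosure ℤ_[p] E,
      (algebraMap ℤ_[p] E a + algebraMap ℤ_[p] E b * θ) * w = 1 := by
  refine (hcrit _ (AQ.mem_O_of_coords hθ.1 a b)).2 ?_
  rintro ⟨w, hwO, hzw⟩
  obtain ⟨c, d, hw⟩ := AQ.coords_exist hθ hwO
  rw [hw, AQ.theta_mul hθ2 hu c d] at hzw
  have h1 := (AQ.coords_unique hθ hzw).1
  have hdvd : (p : ℤ_[p]) ∣ a := ⟨d * u₁, h1⟩
  exact (PadicInt.not_isUnit_iff.2 ((PadicInt.norm_lt_one_iff_dvd a).2 hdvd)) ha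

lemma AQ.const_isUnit (hθ : IsIntBasis p E θ) (hθ2 : θ ^ 2 = (p : E) * u) {u₁ u₂ : ℤ_[p]}
    (hu : u = algebraMap ℤ_[p] E u₁ + algebraMap ℤ_[p] E u₂ * θ) {a b c d : ℤ_[p]}
    (h : (algebraMap ℤ_[p] E a + algebraMap ℤ_[p] E b * θ)
        * (algebraMap ℤ_[p] E c + algebraMap ℤ_[p] E d * θ) = 1) : IsUnit a := by
  rw [AQ.mul_coords hθ2 hu] at h
  have h' : algebraMap ℤ_[p] E (a * c + b * d * p * u₁)
      + algebraMap ℤ_[p] E (a * d + b * c + b * d * p * u₂) * θ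
      = algebraMap ℤ_[p] E 1 + algebraMap ℤ_[p] E 0 * θ := by simpa using h
  have h1 := (AQ.coords_unique hθ h').1
  exact AQ.padic_unit_of a c (b * d * u₁) (by linear_combination h1)

lemma AQ.chiV_ne_zero {F : Type*} [Field F] (χ : Fˣ →* ℂˣ) {z : F} (hz : z ≠ 0) :
    chiV χ z ≠ 0 := by
  rw [chiV, dif_pos hz]; exact Units.ne_zero _

lemma AQ.chiV_mul {F : Type*} [Field F] (χ : Fˣ →* ℂˣ) {x y : F} (hx : x ≠ 0) (hy : y ≠ 0) :
    chiV χ (x * y) = chiV χ x * chiV χ y := by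
  rw [chiV, chiV, chiV, dif_pos hx, dif_pos hy, dif_pos (mul_ne_zero hx hy)]
  rw [show Units.mk0 (x * y) (mul_ne_zero hx hy) = Units.mk0 x hx * Units.mk0 y hy
      from Units.ext rfl, map_mul, Units.val_mul]

lemma AQ.key (hθ : IsIntBasis p E θ)
    (hcrit : ∀ z ∈ integralClosure ℤ_[p] E,
      ((∃ w ∈ integralClosure ℤ_[p] E, z * w = 1) ↔
        ¬ ∃ w ∈ integralClosure ℤ_[p] E, z = θ * w))
    (hθ2 : θ ^ 2 = (p : E) * u) {u₁ u₂ : ℤ_[p]}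
    (hu : u = algebraMap ℤ_[p] E u₁ + algebraMap ℤ_[p] E u₂ * θ)
    {χ : Eˣ →* ℂˣ} {n : ℕ} (hn : 0 < n)
    (hχ1 : ∀ w : Eˣ, MemOEiUnits p E n w → χ w = 1)
    {w : E} (hwO : w ∈ integralClosure ℤ_[p] E) :
    1 + (p : E) ^ n * w ≠ 0 ∧ chiV χ (1 + (p : E) ^ n * w) = 1 := by
  obtain ⟨x, y, hw⟩ := AQ.coords_exist hθ hwO
  have hz : 1 + (p : E) ^ n * w
      = algebraMap ℤ_[p] E (1 + (p : ℤ_[p]) ^ n * x) + algebraMap ℤ_[p] E ((p : ℤ_[p]) ^ n * y) * θ := by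
    simp only [hw, map_add, map_mul, map_one, map_pow, map_natCast]; ring
  have hpn : (p : ℤ_[p]) * (p : ℤ_[p]) ^ (n - 1) = (p : ℤ_[p]) ^ n := by
    rw [← pow_succ', Nat.sub_add_cancel hn]
  have hconst : IsUnit (1 + (p : ℤ_[p]) ^ n * x) := by
    apply AQ.padic_unit_of _ 1 (-((p : ℤ_[p]) ^ (n - 1) * x))
    linear_combination (-x) * hpn
  obtain ⟨w', hw'O, hzw'⟩ := AQ.inv_exists hθ hcrit hθ2 hu hconst
  rw [← hz] at hzw'
  have hne : 1 + (p : E) ^ n * w ≠ 0 := left_ne_zero_of_mul_eq_one hzw'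
  refine ⟨hne, ?_⟩
  have hzO : 1 + (p : E) ^ n * w ∈ integralClosure ℤ_[p] E := by
    rw [hz]; exact AQ.mem_O_of_coords hθ.1 _ _
  have hmem : MemOEiUnits p E n (Units.mk0 _ hne) := by
    refine ⟨⟨1, w, hwO, by simp⟩, hzO, ?_⟩
    rw [Units.val_inv_eq_inv_val, Units.val_mk0, inv_eq_of_mul_eq_one_right hzw']
    exact hw'O
  have h1 := hχ1 _ hmem
  rw [chiV, dif_pos hne, h1, Units.val_one]

lemma AQ.chi_scalar {χ : Eˣ →* ℂˣ} (hχQ : TrivialOnQp p E χ) (t : ℤ_[p]ˣ) (w : Eˣ)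
    (hw : (w : E) = algebraMap ℤ_[p] E (t : ℤ_[p])) : χ w = 1 := by
  have hw' : w = Units.map (algebraMap ℚ_[p] E).toMonoidHom
      (Units.map (algebraMap ℤ_[p] ℚ_[p]).toMonoidHom t) := by
    apply Units.ext
    simp only [Units.coe_map, RingHom.toMonoidHom_eq_coe, MonoidHom.coe_coe]
    rw [hw, IsScalarTower.algebraMap_apply ℤ_[p] ℚ_[p] E]
  rw [hw']
  exact hχQ _

lemma AQ.sum_vanish {n : ℕ} (f : ℤ_[p] → ℂ) (T : Finset ℤ_[p])
    (hT : ∀ x : ℤ_[p], ∃! b, b ∈ T ∧ (p : ℤ_[p]) ^ n ∣ (x - b))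
    (δ : ℤ_[p]) (ζ : ℂ) (hζ1 : ζ ≠ 1)
    (hinv : ∀ b b' : ℤ_[p], (p : ℤ_[p]) ^ n ∣ (b - b') → f b = f b')
    (hshift : ∀ b, f (b + δ) = ζ * f b) :
    ∑ b ∈ T, (f b)⁻¹ = 0 := by
  choose r hr1 hr2 using fun x => (hT x).exists
  have huniq : ∀ x b, b ∈ T → (p : ℤ_[p]) ^ n ∣ (x - b) → b = r x :=
    fun x b h1 h2 => (hT x).unique ⟨h1, h2⟩ ⟨hr1 x, hr2 x⟩
  have h1 : ∑ b ∈ T, (f (b + δ))⁻¹ = ζ⁻¹ * ∑ b ∈ T, (f b)⁻¹ := by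
    rw [Finset.mul_sum]
    exact Finset.sum_congr rfl fun b _ => by rw [hshift b, mul_inv]
  have h2 : ∑ b ∈ T, (f (b + δ))⁻¹ = ∑ b ∈ T, (f b)⁻¹ := by
    refine Finset.sum_nbij' (fun b => r (b + δ)) (fun b => r (b - δ)) (fun b _ => hr1 _)
      (fun b _ => hr1 _) ?_ ?_ ?_
    · intro b hb
      refine (huniq _ b hb ?_).symm
      have h := dvd_neg.mpr (hr2 (b + δ))
      rwa [show -((b + δ) - r (b + δ)) = (r (b + δ) - δ) - b by ring] at h
    · intro b hb
      refine (huniq _ b hb ?_).symm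
      have h := dvd_neg.mpr (hr2 (b - δ))
      rwa [show -((b - δ) - r (b - δ)) = (r (b - δ) + δ) - b by ring] at h
    · intro b _
      exact congrArg Inv.inv (hinv _ _ (hr2 (b + δ)))
  have h3 : (ζ⁻¹ - 1) * (∑ b ∈ T, (f b)⁻¹) = 0 := by
    rw [sub_mul, one_mul, ← h1, h2, sub_self]
  rcases mul_eq_zero.1 h3 with h | h
  · exact absurd (inv_eq_one.1 (sub_eq_zero.1 h)) hζ1
  · exact h


lemma AQ.coords_one (hθ : IsIntBasis p E θ) {a b : ℤ_[p]}
    (h : algebraMap ℤ_[p] E a + algebraMap ℤ_[p] E b * θ = 1) : a = 1 ∧ b = 0 := by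
  have h' : algebraMap ℤ_[p] E a + algebraMap ℤ_[p] E b * θ
      = algebraMap ℤ_[p] E 1 + algebraMap ℤ_[p] E 0 * θ := by rw [h]; simp
  exact AQ.coords_unique hθ h'

end Helpers

set_option maxHeartbeats 1000000

/-- **Lemma 3.8(1)** (ramified prime case). Let `E/ℚ_p` be a ramified quadratic
extension with maximal ideal `𝔭 = θ𝒪_E`, `𝔭² = p𝒪_E`, and `{1, θ}` a `ℤ_p`-basis of
`𝒪_E`. Let `χ : E^× → ℂ^×` be trivial on `ℚ_p^×` with conductor exponent `n > 0`.
Then `∑_b χ(1+bθ)⁻¹ = 0` and `∑_a χ(ap+θ)⁻¹ = 0`, where `b` and `a` each run over a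
complete set of representatives of `ℤ_p/p^n ℤ_p` (the summands depending only on the
residue classes of `b` and `a` modulo `p^n`). -/
theorem lemma_3_8_1 (p : ℕ) [Fact p.Prime]
    (E : Type*) [Field E] [Algebra ℚ_[p] E] [Algebra ℤ_[p] E]
    [IsScalarTower ℤ_[p] ℚ_[p] E]
    (θ : E) (hE : Ramified p E θ) (hθ : IsIntBasis p E θ)
    (χ : Eˣ →* ℂˣ) (hχQ : TrivialOnQp p E χ)
    (n : ℕ) (hn : 0 < n) (hχn : CondExp p E χ n)
    (T A : Finset ℤ_[p])
    (hT : ∀ x : ℤ_[p], ∃! b, b ∈ T ∧ (p : ℤ_[p]) ^ n ∣ (x - b))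
    (hA : ∀ x : ℤ_[p], ∃! a, a ∈ A ∧ (p : ℤ_[p]) ^ n ∣ (x - a)) :
    (∀ b b' : ℤ_[p], (p : ℤ_[p]) ^ n ∣ (b - b') →
        chiV χ (1 + algebraMap ℤ_[p] E b * θ)
          = chiV χ (1 + algebraMap ℤ_[p] E b' * θ)) ∧
    (∀ a a' : ℤ_[p], (p : ℤ_[p]) ^ n ∣ (a - a') →
        chiV χ (algebraMap ℤ_[p] E a * (p : E) + θ)
          = chiV χ (algebraMap ℤ_[p] E a' * (p : E) + θ)) ∧
    (∑ b ∈ T, (chiV χ (1 + algebraMap ℤ_[p] E b * θ))⁻¹ = 0) ∧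
    (∑ a ∈ A, (chiV χ (algebraMap ℤ_[p] E a * (p : E) + θ))⁻¹ = 0) := by
  classical
  obtain ⟨-, hθO, hcrit, u, huO, ⟨v, hvO, huv⟩, hθ2⟩ := hE
  obtain ⟨u₁, u₂, hu⟩ := AQ.coords_exist hθ huO
  obtain ⟨hχ1, hχ2⟩ := hχn
  have hpn : (p : ℤ_[p]) * (p : ℤ_[p]) ^ (n - 1) = (p : ℤ_[p]) ^ n := by
    rw [← pow_succ', Nat.sub_add_cancel hn]
  have hpnE : (p : E) * (p : E) ^ (n - 1) = (p : E) ^ n := by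
    rw [← pow_succ', Nat.sub_add_cancel hn]
  -- inverses of 1 + b θ
  have hz1 : ∀ b : ℤ_[p], ∃ w ∈ integralClosure ℤ_[p] E, (1 + algebraMap ℤ_[p] E b * θ) * w = 1 := by
    intro b
    have h := AQ.inv_exists hθ hcrit hθ2 hu (a := 1) (b := b) isUnit_one
    rwa [map_one] at h
  -- Part 1: invariance
  have inv1 : ∀ b b' : ℤ_[p], (p : ℤ_[p]) ^ n ∣ (b - b') →
      chiV χ (1 + algebraMap ℤ_[p] E b * θ) = chiV χ (1 + algebraMap ℤ_[p] E b' * θ) := by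
    rintro b b' ⟨k, hk⟩
    obtain ⟨w', hw'O, hw'⟩ := hz1 b'
    have hbE : algebraMap ℤ_[p] E b = algebraMap ℤ_[p] E b' + (p : E) ^ n * algebraMap ℤ_[p] E k := by
      rw [show b = b' + (p : ℤ_[p]) ^ n * k by linear_combination hk]
      simp only [map_add, map_mul, map_pow, map_natCast]
    have hfac : 1 + algebraMap ℤ_[p] E b * θ = (1 + algebraMap ℤ_[p] E b' * θ) * (1 + (p : E) ^ n * (algebraMap ℤ_[p] E k * θ * w')) := by
      linear_combination θ * hbE - ((p : E) ^ n * (algebraMap ℤ_[p] E k * θ)) * hw'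
    have hkO : algebraMap ℤ_[p] E k * θ * w' ∈ integralClosure ℤ_[p] E :=
      mul_mem (mul_mem (Subalgebra.algebraMap_mem _ _) hθO) hw'O
    obtain ⟨hne, hval⟩ := AQ.key hθ hcrit hθ2 hu hn hχ1 hkO
    have hb'ne : 1 + algebraMap ℤ_[p] E b' * θ ≠ 0 := left_ne_zero_of_mul_eq_one hw'
    rw [hfac, AQ.chiV_mul χ hb'ne hne, hval, mul_one]
  -- shift lemma A
  have shiftA : ∀ b c : ℤ_[p],
      chiV χ (1 + algebraMap ℤ_[p] E (b + (p : ℤ_[p]) ^ (n - 1) * c) * θ)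
      = chiV χ (1 + algebraMap ℤ_[p] E ((p : ℤ_[p]) ^ (n - 1) * c) * θ) * chiV χ (1 + algebraMap ℤ_[p] E b * θ) := by
    intro b c
    obtain ⟨wb, hwbO, hwb⟩ := hz1 b
    obtain ⟨wc, hwcO, hwc⟩ := hz1 ((p : ℤ_[p]) ^ (n - 1) * c)
    have hprod : (1 + algebraMap ℤ_[p] E b * θ) * (1 + algebraMap ℤ_[p] E ((p : ℤ_[p]) ^ (n - 1) * c) * θ)
        = (1 + algebraMap ℤ_[p] E (b + (p : ℤ_[p]) ^ (n - 1) * c) * θ) + (p : E) ^ n * (algebraMap ℤ_[p] E (b * c) * u) := by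
      simp only [map_add, map_mul, map_pow, map_natCast]
      linear_combination (algebraMap ℤ_[p] E b * algebraMap ℤ_[p] E c * (p : E) ^ (n - 1)) * hθ2 + (algebraMap ℤ_[p] E b * algebraMap ℤ_[p] E c * u) * hpnE
    have h2 : ((1 + algebraMap ℤ_[p] E b * θ) * (1 + algebraMap ℤ_[p] E ((p : ℤ_[p]) ^ (n - 1) * c) * θ))
        * ((p : E) ^ n * (-(algebraMap ℤ_[p] E (b * c) * u * (wc * wb))))
        = -((p : E) ^ n * (algebraMap ℤ_[p] E (b * c) * u)) := by
      linear_combination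
        (-((p : E) ^ n * (algebraMap ℤ_[p] E (b * c) * u) * ((1 + algebraMap ℤ_[p] E ((p : ℤ_[p]) ^ (n - 1) * c) * θ) * wc))) * hwb
        + (-((p : E) ^ n * (algebraMap ℤ_[p] E (b * c) * u))) * hwc
    have hfac : 1 + algebraMap ℤ_[p] E (b + (p : ℤ_[p]) ^ (n - 1) * c) * θ
        = ((1 + algebraMap ℤ_[p] E b * θ) * (1 + algebraMap ℤ_[p] E ((p : ℤ_[p]) ^ (n - 1) * c) * θ))
          * (1 + (p : E) ^ n * (-(algebraMap ℤ_[p] E (b * c) * u * (wc * wb)))) := by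
      rw [mul_add, mul_one, h2, hprod]; ring
    have hWO : -(algebraMap ℤ_[p] E (b * c) * u * (wc * wb)) ∈ integralClosure ℤ_[p] E :=
      neg_mem (mul_mem (mul_mem (Subalgebra.algebraMap_mem _ _) huO) (mul_mem hwcO hwbO))
    obtain ⟨hne, hval⟩ := AQ.key hθ hcrit hθ2 hu hn hχ1 hWO
    have hzbne : 1 + algebraMap ℤ_[p] E b * θ ≠ 0 := left_ne_zero_of_mul_eq_one hwb
    have hzcne : 1 + algebraMap ℤ_[p] E ((p : ℤ_[p]) ^ (n - 1) * c) * θ ≠ 0 := left_ne_zero_of_mul_eq_one hwc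
    rw [hfac, AQ.chiV_mul χ (mul_ne_zero hzbne hzcne) hne, hval, mul_one,
      AQ.chiV_mul χ hzbne hzcne, mul_comm]
  -- nontrivial value
  have hζex : ∃ c₀ : ℤ_[p], chiV χ (1 + algebraMap ℤ_[p] E ((p : ℤ_[p]) ^ (n - 1) * c₀) * θ) ≠ 1 := by
    obtain ⟨v₀, ⟨⟨s, w, hwO, hv₀⟩, hv₀O, hv₀iO⟩, hχv₀⟩ := hχ2 hn
    obtain ⟨x, y, hw⟩ := AQ.coords_exist hθ hwO
    have hv₀' : (v₀ : E) = algebraMap ℤ_[p] E (s + (p : ℤ_[p]) ^ (n - 1) * x)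
        + algebraMap ℤ_[p] E ((p : ℤ_[p]) ^ (n - 1) * y) * θ := by
      rw [hv₀, hw]; simp only [map_add, map_mul, map_pow, map_natCast]; ring
    obtain ⟨c, d, hvi⟩ := AQ.coords_exist hθ hv₀iO
    have hone' : (algebraMap ℤ_[p] E (s + (p : ℤ_[p]) ^ (n - 1) * x) + algebraMap ℤ_[p] E ((p : ℤ_[p]) ^ (n - 1) * y) * θ)
        * (algebraMap ℤ_[p] E c + algebraMap ℤ_[p] E d * θ) = 1 := by
      rw [← hv₀', ← hvi]; exact Units.mul_inv v₀
    obtain ⟨tu, htu⟩ := AQ.const_isUnit hθ hθ2 hu hone'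
    refine ⟨y * ↑tu⁻¹, ?_⟩
    have htt : (s + (p : ℤ_[p]) ^ (n - 1) * x) * ↑tu⁻¹ = 1 := by
      rw [← htu]; exact tu.mul_inv
    have hmm : (s + (p : ℤ_[p]) ^ (n - 1) * x) * ((p : ℤ_[p]) ^ (n - 1) * (y * ↑tu⁻¹))
        = (p : ℤ_[p]) ^ (n - 1) * y := by
      linear_combination ((p : ℤ_[p]) ^ (n - 1) * y) * htt
    have hm : (v₀ : E) = algebraMap ℤ_[p] E (s + (p : ℤ_[p]) ^ (n - 1) * x)
        * (1 + algebraMap ℤ_[p] E ((p : ℤ_[p]) ^ (n - 1) * (y * ↑tu⁻¹)) * θ) := by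
      rw [hv₀', mul_add, mul_one, ← mul_assoc, ← map_mul, hmm]
    obtain ⟨wm, hwmO, hwm⟩ := hz1 ((p : ℤ_[p]) ^ (n - 1) * (y * ↑tu⁻¹))
    have hmne : 1 + algebraMap ℤ_[p] E ((p : ℤ_[p]) ^ (n - 1) * (y * ↑tu⁻¹)) * θ ≠ 0 :=
      left_ne_zero_of_mul_eq_one hwm
    have htIsU : IsUnit (s + (p : ℤ_[p]) ^ (n - 1) * x) := ⟨tu, htu⟩
    have htE : (algebraMap ℤ_[p] E (s + (p : ℤ_[p]) ^ (n - 1) * x) : E) ≠ 0 :=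
      (htIsU.map (algebraMap ℤ_[p] E)).ne_zero
    have hsplit : v₀ = Units.mk0 _ htE * Units.mk0 _ hmne := by
      apply Units.ext
      rw [Units.val_mul, Units.val_mk0, Units.val_mk0]; exact hm
    have hχm : χ (Units.mk0 _ hmne) ≠ 1 := by
      intro hval
      apply hχv₀
      rw [hsplit, map_mul, hval, mul_one]
      exact AQ.chi_scalar hχQ tu _ (by rw [Units.val_mk0, htu])
    rw [chiV, dif_pos hmne]
    intro hval
    exact hχm (Units.val_eq_one.1 hval)
  obtain ⟨c₀, hζ1⟩ := hζex
  -- part-2 infrastructure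
  haveI : CharZero E := charZero_of_injective_algebraMap (algebraMap ℚ_[p] E).injective
  have hθθv : θ * (θ * v) = (p : E) := by
    rw [← mul_assoc, ← sq, hθ2, mul_assoc, huv, mul_one]
  have hθne : θ ≠ 0 := by
    intro h0
    exact zero_ne_one (AQ.coords_unique hθ (a := 0) (b := 0) (a' := 0) (b' := 1)
      (by simp [h0])).2
  obtain ⟨v₁, v₂, hv⟩ := AQ.coords_exist hθ hvO
  have hθv_co : θ * v = algebraMap ℤ_[p] E (p * (v₂ * u₁)) + algebraMap ℤ_[p] E (v₁ + p * (v₂ * u₂)) * θ := by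
    rw [hv]; exact AQ.theta_mul hθ2 hu v₁ v₂
  have hVa : ∀ a : ℤ_[p], 1 + algebraMap ℤ_[p] E a * (θ * v)
      = algebraMap ℤ_[p] E (1 + a * (p * (v₂ * u₁))) + algebraMap ℤ_[p] E (a * (v₁ + p * (v₂ * u₂))) * θ := by
    intro a
    rw [hθv_co]; simp only [map_add, map_mul, map_one, map_natCast]; ring
  have hVainv : ∀ a : ℤ_[p], ∃ w ∈ integralClosure ℤ_[p] E,
      (1 + algebraMap ℤ_[p] E a * (θ * v)) * w = 1 := by
    intro a
    rw [hVa a]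
    exact AQ.inv_exists hθ hcrit hθ2 hu
      (AQ.padic_unit_of _ 1 (-(a * (v₂ * u₁))) (by ring))
  have hθva : ∀ a : ℤ_[p], θ * (1 + algebraMap ℤ_[p] E a * (θ * v)) = algebraMap ℤ_[p] E a * (p : E) + θ := by
    intro a
    linear_combination (algebraMap ℤ_[p] E a * v) * hθ2 + (algebraMap ℤ_[p] E a * (p : E)) * huv
  have hapθ_ne : ∀ a : ℤ_[p], algebraMap ℤ_[p] E a * (p : E) + θ ≠ 0 := by
    intro a
    rw [← hθva a]
    obtain ⟨w, -, hw⟩ := hVainv a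
    exact mul_ne_zero hθne (left_ne_zero_of_mul_eq_one hw)
  -- Part 2: invariance
  have inv2 : ∀ a a' : ℤ_[p], (p : ℤ_[p]) ^ n ∣ (a - a') →
      chiV χ (algebraMap ℤ_[p] E a * (p : E) + θ) = chiV χ (algebraMap ℤ_[p] E a' * (p : E) + θ) := by
    rintro a a' ⟨k, hk⟩
    obtain ⟨wa, hwaO, hwa⟩ := hVainv a'
    have haE : algebraMap ℤ_[p] E a = algebraMap ℤ_[p] E a' + (p : E) ^ n * algebraMap ℤ_[p] E k := by
      rw [show a = a' + (p : ℤ_[p]) ^ n * k by linear_combination hk]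
      simp only [map_add, map_mul, map_pow, map_natCast]
    have e2 : (algebraMap ℤ_[p] E a' * (p : E) + θ) * ((p : E) ^ n * (algebraMap ℤ_[p] E k * ((θ * v) * wa)))
        = (p : E) ^ n * (algebraMap ℤ_[p] E k * (p : E)) := by
      rw [← hθva a']
      calc θ * (1 + algebraMap ℤ_[p] E a' * (θ * v)) * ((p : E) ^ n * (algebraMap ℤ_[p] E k * ((θ * v) * wa)))
          = (p : E) ^ n * algebraMap ℤ_[p] E k * ((θ * (θ * v)) * ((1 + algebraMap ℤ_[p] E a' * (θ * v)) * wa)) := by ring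
        _ = (p : E) ^ n * (algebraMap ℤ_[p] E k * (p : E)) := by rw [hθθv, hwa, mul_one]; ring
    have hfac : algebraMap ℤ_[p] E a * (p : E) + θ
        = (algebraMap ℤ_[p] E a' * (p : E) + θ) * (1 + (p : E) ^ n * (algebraMap ℤ_[p] E k * ((θ * v) * wa))) := by
      rw [mul_add, mul_one, e2, haE]; ring
    have hWO : algebraMap ℤ_[p] E k * ((θ * v) * wa) ∈ integralClosure ℤ_[p] E :=
      mul_mem (Subalgebra.algebraMap_mem _ _) (mul_mem (mul_mem hθO hvO) hwaO)
    obtain ⟨hne, hval⟩ := AQ.key hθ hcrit hθ2 hu hn hχ1 hWO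
    rw [hfac, AQ.chiV_mul χ (hapθ_ne a') hne, hval, mul_one]
  -- v₁ is a unit
  have hv₁ : IsUnit v₁ := by
    by_contra h'
    obtain ⟨v₁', hv₁'⟩ : (p : ℤ_[p]) ∣ v₁ :=
      (PadicInt.norm_lt_one_iff_dvd v₁).1 (PadicInt.not_isUnit_iff.1 h')
    have hh : θ * v = (p : E) * (algebraMap ℤ_[p] E (v₂ * u₁) + algebraMap ℤ_[p] E (v₁' + v₂ * u₂) * θ) := by
      rw [hθv_co, hv₁']
      simp only [map_add, map_mul, map_natCast]; ring
    have hpne : (p : E) ≠ 0 := Nat.cast_ne_zero.2 (Nat.Prime.ne_zero Fact.out)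
    have hθh : θ * (algebraMap ℤ_[p] E (v₂ * u₁) + algebraMap ℤ_[p] E (v₁' + v₂ * u₂) * θ) = 1 := by
      apply mul_left_cancel₀ hpne
      rw [mul_one, show (p : E) * (θ * (algebraMap ℤ_[p] E (v₂ * u₁) + algebraMap ℤ_[p] E (v₁' + v₂ * u₂) * θ))
        = θ * ((p : E) * (algebraMap ℤ_[p] E (v₂ * u₁) + algebraMap ℤ_[p] E (v₁' + v₂ * u₂) * θ)) by ring, ← hh, hθθv]
    exact ((hcrit θ hθO).1 ⟨_, AQ.mem_O_of_coords hθ.1 _ _, hθh⟩)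
      ⟨1, one_mem _, (mul_one θ).symm⟩
  obtain ⟨x₀u, hx₀u⟩ := hv₁
  -- shift lemma B
  have shiftB : ∀ a c : ℤ_[p], ∃ x : ℤ_[p], (p : ℤ_[p]) ∣ (x - v₁) ∧
      chiV χ (algebraMap ℤ_[p] E (a + (p : ℤ_[p]) ^ (n - 1) * c) * (p : E) + θ)
      = chiV χ (1 + algebraMap ℤ_[p] E ((p : ℤ_[p]) ^ (n - 1) * (c * x)) * θ)
        * chiV χ (algebraMap ℤ_[p] E a * (p : E) + θ) := by
    intro a c
    obtain ⟨wa, hwaO, hwa⟩ := hVainv a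
    obtain ⟨e, f, hwa_co⟩ := AQ.coords_exist hθ hwaO
    have hone1 : (algebraMap ℤ_[p] E (1 + a * (p * (v₂ * u₁))) + algebraMap ℤ_[p] E (a * (v₁ + p * (v₂ * u₂))) * θ)
        * (algebraMap ℤ_[p] E e + algebraMap ℤ_[p] E f * θ) = 1 := by
      rw [← hVa a, ← hwa_co]; exact hwa
    rw [AQ.mul_coords hθ2 hu] at hone1
    have hcoords := AQ.coords_one hθ hone1
    have hep : (p : ℤ_[p]) ∣ (e - 1) :=
      ⟨-(a * (v₂ * u₁) * e + a * (v₁ + p * (v₂ * u₂)) * f * u₁), by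
        linear_combination hcoords.1⟩
    have hg_co : v * wa = algebraMap ℤ_[p] E (v₁ * e + v₂ * f * p * u₁)
        + algebraMap ℤ_[p] E (v₁ * f + v₂ * e + v₂ * f * p * u₂) * θ := by
      rw [hv, hwa_co]; exact AQ.mul_coords hθ2 hu v₁ v₂ e f
    have hθg : θ * (v * wa) = algebraMap ℤ_[p] E (p * ((v₁ * f + v₂ * e + v₂ * f * p * u₂) * u₁))
        + algebraMap ℤ_[p] E ((v₁ * e + v₂ * f * p * u₁)
            + p * ((v₁ * f + v₂ * e + v₂ * f * p * u₂) * u₂)) * θ := by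
      rw [hg_co]; exact AQ.theta_mul hθ2 hu _ _
    refine ⟨(v₁ * e + v₂ * f * p * u₁) + p * ((v₁ * f + v₂ * e + v₂ * f * p * u₂) * u₂),
      ?_, ?_⟩
    · obtain ⟨m, hm⟩ := hep
      exact ⟨v₁ * m + v₂ * f * u₁ + (v₁ * f + v₂ * e + v₂ * f * p * u₂) * u₂, by
        linear_combination v₁ * hm⟩
    · have e1 : algebraMap ℤ_[p] E (a + (p : ℤ_[p]) ^ (n - 1) * c) * (p : E) + θ
          = (algebraMap ℤ_[p] E a * (p : E) + θ) + algebraMap ℤ_[p] E ((p : ℤ_[p]) ^ (n - 1) * c) * (p : E) := by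
        simp only [map_add, map_mul, map_pow, map_natCast]; ring
      have e2 : (algebraMap ℤ_[p] E a * (p : E) + θ) * (algebraMap ℤ_[p] E ((p : ℤ_[p]) ^ (n - 1) * c) * (θ * (v * wa)))
          = algebraMap ℤ_[p] E ((p : ℤ_[p]) ^ (n - 1) * c) * (p : E) := by
        rw [← hθva a]
        calc θ * (1 + algebraMap ℤ_[p] E a * (θ * v)) * (algebraMap ℤ_[p] E ((p : ℤ_[p]) ^ (n - 1) * c) * (θ * (v * wa)))
            = algebraMap ℤ_[p] E ((p : ℤ_[p]) ^ (n - 1) * c)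
              * ((θ * (θ * v)) * ((1 + algebraMap ℤ_[p] E a * (θ * v)) * wa)) := by ring
          _ = algebraMap ℤ_[p] E ((p : ℤ_[p]) ^ (n - 1) * c) * (p : E) := by rw [hθθv, hwa, mul_one]
      have hfac1 : algebraMap ℤ_[p] E (a + (p : ℤ_[p]) ^ (n - 1) * c) * (p : E) + θ
          = (algebraMap ℤ_[p] E a * (p : E) + θ)
            * (1 + algebraMap ℤ_[p] E ((p : ℤ_[p]) ^ (n - 1) * c) * (θ * (v * wa))) := by
        rw [mul_add, mul_one, e2]; exact e1
      obtain ⟨wM, hwMO, hwM⟩ := hz1 ((p : ℤ_[p]) ^ (n - 1) * (c * ((v₁ * e + v₂ * f * p * u₁)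
            + p * ((v₁ * f + v₂ * e + v₂ * f * p * u₂) * u₂))))
      have hF : 1 + algebraMap ℤ_[p] E ((p : ℤ_[p]) ^ (n - 1) * c) * (θ * (v * wa))
          = (1 + algebraMap ℤ_[p] E ((p : ℤ_[p]) ^ (n - 1) * (c * ((v₁ * e + v₂ * f * p * u₁)
              + p * ((v₁ * f + v₂ * e + v₂ * f * p * u₂) * u₂)))) * θ)
            + (p : E) ^ n * algebraMap ℤ_[p] E (c * ((v₁ * f + v₂ * e + v₂ * f * p * u₂) * u₁)) := by
        rw [hθg]
        simp only [map_add, map_mul, map_pow, map_natCast]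
        linear_combination (algebraMap ℤ_[p] E c * (algebraMap ℤ_[p] E v₁ * algebraMap ℤ_[p] E f + algebraMap ℤ_[p] E v₂ * algebraMap ℤ_[p] E e
          + algebraMap ℤ_[p] E v₂ * algebraMap ℤ_[p] E f * (p : E) * algebraMap ℤ_[p] E u₂) * algebraMap ℤ_[p] E u₁) * hpnE
      have h2' : (1 + algebraMap ℤ_[p] E ((p : ℤ_[p]) ^ (n - 1) * (c * ((v₁ * e + v₂ * f * p * u₁)
              + p * ((v₁ * f + v₂ * e + v₂ * f * p * u₂) * u₂)))) * θ)
            * ((p : E) ^ n * (algebraMap ℤ_[p] E (c * ((v₁ * f + v₂ * e + v₂ * f * p * u₂) * u₁)) * wM))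
          = (p : E) ^ n * algebraMap ℤ_[p] E (c * ((v₁ * f + v₂ * e + v₂ * f * p * u₂) * u₁)) := by
        linear_combination
          ((p : E) ^ n * algebraMap ℤ_[p] E (c * ((v₁ * f + v₂ * e + v₂ * f * p * u₂) * u₁))) * hwM
      have hfac2 : 1 + algebraMap ℤ_[p] E ((p : ℤ_[p]) ^ (n - 1) * c) * (θ * (v * wa))
          = (1 + algebraMap ℤ_[p] E ((p : ℤ_[p]) ^ (n - 1) * (c * ((v₁ * e + v₂ * f * p * u₁)
              + p * ((v₁ * f + v₂ * e + v₂ * f * p * u₂) * u₂)))) * θ)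
            * (1 + (p : E) ^ n
              * (algebraMap ℤ_[p] E (c * ((v₁ * f + v₂ * e + v₂ * f * p * u₂) * u₁)) * wM)) := by
        rw [mul_add, mul_one, h2']; exact hF
      obtain ⟨hne, hval⟩ := AQ.key hθ hcrit hθ2 hu hn hχ1
        (mul_mem (Subalgebra.algebraMap_mem _ _) hwMO)
      have hMne : 1 + algebraMap ℤ_[p] E ((p : ℤ_[p]) ^ (n - 1) * (c * ((v₁ * e + v₂ * f * p * u₁)
          + p * ((v₁ * f + v₂ * e + v₂ * f * p * u₂) * u₂)))) * θ ≠ 0 :=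
        left_ne_zero_of_mul_eq_one hwM
      rw [hfac1, hfac2, AQ.chiV_mul χ (hapθ_ne a) (mul_ne_zero hMne hne),
        AQ.chiV_mul χ hMne hne, hval, mul_one, mul_comm]
  -- conclusion
  refine ⟨inv1, inv2, ?_, ?_⟩
  · exact AQ.sum_vanish (fun b => chiV χ (1 + algebraMap ℤ_[p] E b * θ)) T hT
      ((p : ℤ_[p]) ^ (n - 1) * c₀) (chiV χ (1 + algebraMap ℤ_[p] E ((p : ℤ_[p]) ^ (n - 1) * c₀) * θ))
      hζ1 inv1 (fun b => shiftA b c₀)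
  · have hshift2 : ∀ a : ℤ_[p],
        chiV χ (algebraMap ℤ_[p] E (a + (p : ℤ_[p]) ^ (n - 1) * (c₀ * ↑x₀u⁻¹)) * (p : E) + θ)
        = chiV χ (1 + algebraMap ℤ_[p] E ((p : ℤ_[p]) ^ (n - 1) * c₀) * θ)
          * chiV χ (algebraMap ℤ_[p] E a * (p : E) + θ) := by
      intro a
      obtain ⟨x, hx, heq⟩ := shiftB a (c₀ * ↑x₀u⁻¹)
      rw [heq]
      congr 1
      have step1 : (p : ℤ_[p]) ^ n ∣
          ((p : ℤ_[p]) ^ (n - 1) * ((c₀ * ↑x₀u⁻¹) * x)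
            - (p : ℤ_[p]) ^ (n - 1) * ((c₀ * ↑x₀u⁻¹) * v₁)) := by
        obtain ⟨m, hm⟩ := hx
        exact ⟨c₀ * ↑x₀u⁻¹ * m, by
          linear_combination ((p : ℤ_[p]) ^ (n - 1) * (c₀ * ↑x₀u⁻¹)) * hm
            + (c₀ * ↑x₀u⁻¹ * m) * hpn⟩
      have hcx : (p : ℤ_[p]) ^ (n - 1) * ((c₀ * ↑x₀u⁻¹) * v₁)
          = (p : ℤ_[p]) ^ (n - 1) * c₀ := by
        have hiv : (↑x₀u⁻¹ : ℤ_[p]) * ↑x₀u = 1 := x₀u.inv_mul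
        rw [← hx₀u]
        linear_combination ((p : ℤ_[p]) ^ (n - 1) * c₀) * hiv
      calc chiV χ (1 + algebraMap ℤ_[p] E ((p : ℤ_[p]) ^ (n - 1) * ((c₀ * ↑x₀u⁻¹) * x)) * θ)
          = chiV χ (1 + algebraMap ℤ_[p] E ((p : ℤ_[p]) ^ (n - 1) * ((c₀ * ↑x₀u⁻¹) * v₁)) * θ) :=
            inv1 _ _ step1
        _ = chiV χ (1 + algebraMap ℤ_[p] E ((p : ℤ_[p]) ^ (n - 1) * c₀) * θ) := by rw [hcx]
    exact AQ.sum_vanish (fun a => chiV χ (algebraMap ℤ_[p] E a * (p : E) + θ)) A hA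
      ((p : ℤ_[p]) ^ (n - 1) * (c₀ * ↑x₀u⁻¹))
      (chiV χ (1 + algebraMap ℤ_[p] E ((p : ℤ_[p]) ^ (n - 1) * c₀) * θ)) hζ1 inv2 hshift2
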